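/- Let ν be a finite measure on a measurable space (Ω, 𝒜), let μ = ν.withDensity ρ be a finite measure, let F ⊆ 𝒜 be a sub-σ-algebra, let Y be a conditional density of μ given F with respect to ν, and set μ_F := ν.withDensity Y. Then D(μ_F‖ν) ≤ D(θ‖ν) for every finite measure θ on (Ω, 𝒜) with θ(A) = μ(A) for all A ∈ F; i.e. μ_F is the information projection of ν onto the set of measures agreeing with μ on F. -/

import Mathlib

open MeasureTheory Filter Topology ENNReal


lemma phi_nonneg {x : ℝ} (hx : 0 ≤ x) : 0 ≤ x * Real.log x - x + 1 := by
  rcases eq_or_lt_of_le hx with h | h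
  · simp [← h]
  · have hlog := Real.log_le_sub_one_of_pos (show (0:ℝ) < x⁻¹ by positivity)
    rw [Real.log_inv] at hlog
    have h2 : x * (-Real.log x) ≤ x * (x⁻¹ - 1) := mul_le_mul_of_nonneg_left hlog hx
    have h3 : x * (x⁻¹ - 1) = 1 - x := by field_simp
    nlinarith

lemma psi_le_phi {a b : ℝ} (ha : 0 < a) (hb : 0 ≤ b) :
    b * Real.log a - a + 1 ≤ b * Real.log b - b + 1 := by
  rcases eq_or_lt_of_le hb with h | h
  · simp [← h]; linarith
  · have h1 := Real.log_le_sub_one_of_pos (show (0:ℝ) < a / b by positivity)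
    rw [Real.log_div (ne_of_gt ha) (ne_of_gt h)] at h1
    have h2 : b * (Real.log a - Real.log b) ≤ b * (a / b - 1) :=
      mul_le_mul_of_nonneg_left h1 hb
    have h3 : b * (a / b - 1) = a - b := by field_simp
    nlinarith

lemma psin_nonneg {a : ℝ} (ha : 0 ≤ a) {c : ℝ} (hc : 1 ≤ c) :
    0 ≤ a * min (Real.log a) c - a + 1 := by
  rcases le_or_gt (Real.log a) c with h2 | h2
  · rw [min_eq_left h2]; exact phi_nonneg ha
  · rw [min_eq_right h2.le]
    have h3 : (1:ℝ) ≤ a := by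
      by_contra hcon
      push_neg at hcon
      have h4 := Real.log_nonpos ha hcon.le
      linarith
    nlinarith

lemma xlogneg_le_one {a : ℝ} (ha : 0 ≤ a) : a * max (-Real.log a) 0 ≤ 1 := by
  rcases eq_or_lt_of_le ha with h | h
  · simp [← h]
  · rcases le_or_gt 1 a with h1 | h1
    · have h0 : max (-Real.log a) 0 = 0 := max_eq_right (by simpa using Real.log_nonneg h1)
      simp [h0]
    · have hlog := Real.log_le_sub_one_of_pos (show (0:ℝ) < a⁻¹ by positivity)
      rw [Real.log_inv] at hlog
      rcases le_or_gt (-Real.log a) 0 with h2 | h2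
      · rw [max_eq_right h2]; simp
      · rw [max_eq_left h2.le]
        have hm : a * -Real.log a ≤ a * (a⁻¹ - 1) := mul_le_mul_of_nonneg_left hlog ha
        have h3 : a * (a⁻¹ - 1) = 1 - a := by field_simp
        linarith

lemma min_log_decomp {u c : ℝ} (hc : 0 ≤ c) :
    min u c = max (min u c) 0 - max (-u) 0 := by
  rcases le_or_gt 0 u with h | h
  · rw [max_eq_left (le_min h hc), max_eq_right (by linarith : -u ≤ 0)]; ring
  · rw [min_eq_left (h.le.trans hc), max_eq_right h.le,
      max_eq_left (by linarith : (0:ℝ) ≤ -u)]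
    ring

lemma infoDiv_core {Ω : Type*} [mΩ : MeasurableSpace Ω] (ν : Measure Ω) [IsFiniteMeasure ν]
    (Y g : Ω → ℝ≥0∞) (hYm : Measurable Y) (hgm : Measurable g)
    (hYint : ∫⁻ x, Y x ∂ν ≠ ∞) (hgint : ∫⁻ x, g x ∂ν ≠ ∞)
    (hzero : ∀ᵐ x ∂ν, Y x = 0 → g x = 0)
    (htower : ∀ q : ℝ → ℝ, Measurable q →
      ∫⁻ x, g x * ENNReal.ofReal (q (Y x).toReal) ∂ν
        = ∫⁻ x, Y x * ENNReal.ofReal (q (Y x).toReal) ∂ν) :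
    ∫⁻ x, ENNReal.ofReal ((Y x).toReal * Real.log (Y x).toReal - (Y x).toReal + 1) ∂ν ≤
    ∫⁻ x, ENNReal.ofReal ((g x).toReal * Real.log (g x).toReal - (g x).toReal + 1) ∂ν := by
  have hYlt : ∀ᵐ x ∂ν, Y x < ∞ := ae_lt_top hYm hYint
  have hglt : ∀ᵐ x ∂ν, g x < ∞ := ae_lt_top hgm hgint
  have hYtm : Measurable fun x => (Y x).toReal := hYm.ennreal_toReal
  have hgtm : Measurable fun x => (g x).toReal := hgm.ennreal_toReal
  -- the truncated inequality
  have main : ∀ c : ℝ, 1 ≤ c →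
      ∫⁻ x, ENNReal.ofReal ((Y x).toReal * min (Real.log (Y x).toReal) c
          - (Y x).toReal + 1) ∂ν ≤
      ∫⁻ x, ENNReal.ofReal ((g x).toReal * Real.log (g x).toReal - (g x).toReal + 1) ∂ν := by
    intro c hc
    have hc0 : (0:ℝ) ≤ c := zero_le_one.trans hc
    set p : ℝ → ℝ := fun t => max (min (Real.log t) c) 0 with hp
    set m : ℝ → ℝ := fun t => max (-Real.log t) 0 with hmdef
    have hpmeas : Measurable p := (Real.measurable_log.min measurable_const).max measurable_const
    have hmmeas : Measurable m := Real.measurable_log.neg.max measurable_const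
    have hp0 : ∀ t : ℝ, 0 ≤ p t := fun t => le_max_right _ _
    have hm0 : ∀ t : ℝ, 0 ≤ m t := fun t => le_max_right _ _
    have hdecomp : ∀ t : ℝ, min (Real.log t) c = p t - m t := fun t => min_log_decomp hc0
    -- ENNReal-valued pieces
    set P : Ω → ℝ≥0∞ := fun x => ENNReal.ofReal (p (Y x).toReal) with hP
    set M : Ω → ℝ≥0∞ := fun x => ENNReal.ofReal (m (Y x).toReal) with hM
    have hPmeas : Measurable P := (hpmeas.comp hYtm).ennreal_ofReal
    have hMmeas : Measurable M := (hmmeas.comp hYtm).ennreal_ofReal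
    set GY : Ω → ℝ≥0∞ := fun x => Y x * P x + 1 with hGY
    set HY : Ω → ℝ≥0∞ := fun x => Y x * M x + Y x with hHY
    set Gg : Ω → ℝ≥0∞ := fun x => g x * P x + 1 with hGg
    set Hg : Ω → ℝ≥0∞ := fun x => g x * M x + Y x with hHg
    have hGYm : Measurable GY := (hYm.mul hPmeas).add measurable_const
    have hHYm : Measurable HY := (hYm.mul hMmeas).add hYm
    have hGgm : Measurable Gg := (hgm.mul hPmeas).add measurable_const
    have hHgm : Measurable Hg := (hgm.mul hMmeas).add hYm
    -- pointwise rewritings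
    have hGYeq : ∀ᵐ x ∂ν, GY x
        = ENNReal.ofReal ((Y x).toReal * p (Y x).toReal + 1) := by
      filter_upwards [hYlt] with x hx
      rw [ENNReal.ofReal_add (mul_nonneg ENNReal.toReal_nonneg (hp0 _)) zero_le_one,
        ENNReal.ofReal_mul ENNReal.toReal_nonneg, ENNReal.ofReal_toReal hx.ne,
        ENNReal.ofReal_one]
    have hHYeq : ∀ᵐ x ∂ν, HY x
        = ENNReal.ofReal ((Y x).toReal * m (Y x).toReal + (Y x).toReal) := by
      filter_upwards [hYlt] with x hx
      rw [ENNReal.ofReal_add (mul_nonneg ENNReal.toReal_nonneg (hm0 _)) ENNReal.toReal_nonneg,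
        ENNReal.ofReal_mul ENNReal.toReal_nonneg, ENNReal.ofReal_toReal hx.ne]
    have hGgeq : ∀ᵐ x ∂ν, Gg x
        = ENNReal.ofReal ((g x).toReal * p (Y x).toReal + 1) := by
      filter_upwards [hglt] with x hx
      rw [ENNReal.ofReal_add (mul_nonneg ENNReal.toReal_nonneg (hp0 _)) zero_le_one,
        ENNReal.ofReal_mul ENNReal.toReal_nonneg, ENNReal.ofReal_toReal hx.ne,
        ENNReal.ofReal_one]
    have hHgeq : ∀ᵐ x ∂ν, Hg x
        = ENNReal.ofReal ((g x).toReal * m (Y x).toReal + (Y x).toReal) := by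
      filter_upwards [hglt, hYlt] with x hx hx'
      rw [ENNReal.ofReal_add (mul_nonneg ENNReal.toReal_nonneg (hm0 _)) ENNReal.toReal_nonneg,
        ENNReal.ofReal_mul ENNReal.toReal_nonneg, ENNReal.ofReal_toReal hx.ne,
        ENNReal.ofReal_toReal hx'.ne]
    -- (f1) : integrand = GY - HY a.e.
    have f1 : ∀ᵐ x ∂ν, ENNReal.ofReal ((Y x).toReal * min (Real.log (Y x).toReal) c
        - (Y x).toReal + 1) = GY x - HY x := by
      filter_upwards [hGYeq, hHYeq] with x h1 h2
      have hr : (Y x).toReal * min (Real.log (Y x).toReal) c - (Y x).toReal + 1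
          = ((Y x).toReal * p (Y x).toReal + 1)
            - ((Y x).toReal * m (Y x).toReal + (Y x).toReal) := by
        rw [hdecomp]; ring
      rw [hr, ENNReal.ofReal_sub _
        (by positivity : (0:ℝ) ≤ (Y x).toReal * m (Y x).toReal + (Y x).toReal), h1, h2]
    -- (f2) : HY ≤ GY a.e.
    have f2 : HY ≤ᵐ[ν] GY := by
      filter_upwards [hGYeq, hHYeq] with x h1 h2
      rw [h1, h2]
      apply ENNReal.ofReal_le_ofReal
      have h3 := psin_nonneg (ENNReal.toReal_nonneg (a := Y x)) hc
      rw [hdecomp] at h3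
      nlinarith [h3]
    -- (f3) : ∫ HY ≠ ∞
    have hYM_le : ∀ᵐ x ∂ν, Y x * M x ≤ 1 := by
      filter_upwards [hYlt] with x hx
      calc Y x * M x = ENNReal.ofReal ((Y x).toReal * m (Y x).toReal) := by
            rw [ENNReal.ofReal_mul ENNReal.toReal_nonneg, ENNReal.ofReal_toReal hx.ne]
      _ ≤ ENNReal.ofReal 1 := ENNReal.ofReal_le_ofReal (xlogneg_le_one ENNReal.toReal_nonneg)
      _ = 1 := ENNReal.ofReal_one
    have hYMint : ∫⁻ x, Y x * M x ∂ν ≠ ∞ := by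
      refine ne_top_of_le_ne_top ?_ (lintegral_mono_ae hYM_le)
      rw [lintegral_one]
      exact (measure_lt_top ν _).ne
    have f3 : ∫⁻ x, HY x ∂ν ≠ ∞ := by
      rw [hHY]
      rw [lintegral_add_right _ hYm]
      exact ENNReal.add_ne_top.mpr ⟨hYMint, hYint⟩
    -- tower identities
    have tP : ∫⁻ x, g x * P x ∂ν = ∫⁻ x, Y x * P x ∂ν := htower p hpmeas
    have tM : ∫⁻ x, g x * M x ∂ν = ∫⁻ x, Y x * M x ∂ν := htower m hmmeas
    have eqG : ∫⁻ x, Gg x ∂ν = ∫⁻ x, GY x ∂ν := by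
      rw [hGg, hGY, lintegral_add_right _ measurable_const,
        lintegral_add_right _ measurable_const, tP]
    have eqH : ∫⁻ x, Hg x ∂ν = ∫⁻ x, HY x ∂ν := by
      rw [hHg, hHY, lintegral_add_right _ hYm, lintegral_add_right _ hYm, tM]
    -- (f6)
    have f6 : ∀ᵐ x ∂ν, Gg x ≤ ENNReal.ofReal ((g x).toReal * min (Real.log (Y x).toReal) c
        - (Y x).toReal + 1) + Hg x := by
      filter_upwards [hGgeq, hHgeq] with x h1 h2
      have hr : (g x).toReal * p (Y x).toReal + 1
          = ((g x).toReal * min (Real.log (Y x).toReal) c - (Y x).toReal + 1)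
            + ((g x).toReal * m (Y x).toReal + (Y x).toReal) := by
        rw [hdecomp]; ring
      rw [h1, h2, hr]
      exact ENNReal.ofReal_add_le
    -- (f7)
    have f7 : ∀ᵐ x ∂ν, ENNReal.ofReal ((g x).toReal * min (Real.log (Y x).toReal) c
        - (Y x).toReal + 1)
        ≤ ENNReal.ofReal ((g x).toReal * Real.log (g x).toReal - (g x).toReal + 1) := by
      filter_upwards [hYlt, hzero] with x hx hz
      by_cases hY0 : Y x = 0
      · rw [hY0 , hz hY0]
        simp [Real.log_zero]
      · have ht : 0 < (Y x).toReal := ENNReal.toReal_pos hY0 hx.ne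
        apply ENNReal.ofReal_le_ofReal
        have h4 : (g x).toReal * min (Real.log (Y x).toReal) c
            ≤ (g x).toReal * Real.log (Y x).toReal :=
          mul_le_mul_of_nonneg_left (min_le_left _ _) ENNReal.toReal_nonneg
        have h5 := psi_le_phi ht (ENNReal.toReal_nonneg (a := g x))
        linarith
    -- measurability of the middle integrand
    have hmidm : Measurable fun x => ENNReal.ofReal ((g x).toReal
        * min (Real.log (Y x).toReal) c - (Y x).toReal + 1) :=
      (((hgtm.mul ((Real.measurable_log.comp hYtm).min measurable_const)).sub
        hYtm).add measurable_const).ennreal_ofReal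
    calc ∫⁻ x, ENNReal.ofReal ((Y x).toReal * min (Real.log (Y x).toReal) c
          - (Y x).toReal + 1) ∂ν
        = ∫⁻ x, (GY x - HY x) ∂ν := lintegral_congr_ae f1
      _ = ∫⁻ x, GY x ∂ν - ∫⁻ x, HY x ∂ν := lintegral_sub hHYm f3 f2
      _ = ∫⁻ x, Gg x ∂ν - ∫⁻ x, Hg x ∂ν := by rw [eqG, eqH]
      _ ≤ ∫⁻ x, ENNReal.ofReal ((g x).toReal * min (Real.log (Y x).toReal) c
          - (Y x).toReal + 1) ∂ν := by
          rw [tsub_le_iff_right, ← lintegral_add_right _ hHgm]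
          exact lintegral_mono_ae f6
      _ ≤ ∫⁻ x, ENNReal.ofReal ((g x).toReal * Real.log (g x).toReal
          - (g x).toReal + 1) ∂ν := lintegral_mono_ae f7
  -- monotone convergence in the truncation level
  set f : ℕ → Ω → ℝ≥0∞ := fun n x => ENNReal.ofReal ((Y x).toReal
    * min (Real.log (Y x).toReal) ((n:ℝ)+1) - (Y x).toReal + 1) with hf
  have hfm : ∀ n, Measurable (f n) := fun n =>
    (((hYtm.mul ((Real.measurable_log.comp hYtm).min measurable_const)).sub
      hYtm).add measurable_const).ennreal_ofReal
  have hfmono : Monotone f := by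
    intro i j hij x
    apply ENNReal.ofReal_le_ofReal
    have h1 : min (Real.log (Y x).toReal) ((i:ℝ)+1) ≤ min (Real.log (Y x).toReal) ((j:ℝ)+1) :=
      min_le_min le_rfl (by exact_mod_cast add_le_add_left (Nat.cast_le.mpr hij) 1)
    have := mul_le_mul_of_nonneg_left h1 (ENNReal.toReal_nonneg (a := Y x))
    linarith
  have hptws : ∀ x, (⨆ n, f n x) = ENNReal.ofReal ((Y x).toReal
      * Real.log (Y x).toReal - (Y x).toReal + 1) := by
    intro x
    apply le_antisymm
    · refine iSup_le fun n => ENNReal.ofReal_le_ofReal ?_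
      have h1 : min (Real.log (Y x).toReal) ((n:ℝ)+1) ≤ Real.log (Y x).toReal :=
        min_le_left _ _
      have := mul_le_mul_of_nonneg_left h1 (ENNReal.toReal_nonneg (a := Y x))
      linarith
    · obtain ⟨n, hn⟩ := exists_nat_ge (Real.log (Y x).toReal)
      refine le_trans (le_of_eq ?_) (le_iSup (fun n => f n x) n)
      simp only [hf]
      rw [min_eq_left (by linarith : Real.log (Y x).toReal ≤ (n:ℝ)+1)]
  calc ∫⁻ x, ENNReal.ofReal ((Y x).toReal * Real.log (Y x).toReal - (Y x).toReal + 1) ∂ν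
      = ∫⁻ x, ⨆ n, f n x ∂ν := lintegral_congr fun x => (hptws x).symm
    _ = ⨆ n, ∫⁻ x, f n x ∂ν := lintegral_iSup hfm hfmono
    _ ≤ ∫⁻ x, ENNReal.ofReal ((g x).toReal * Real.log (g x).toReal
        - (g x).toReal + 1) ∂ν := by
        refine iSup_le fun n => ?_
        exact main ((n:ℝ)+1) (by linarith [Nat.cast_nonneg (α := ℝ) n])

open Classical in
/-- Information divergence `D(μ‖ν)`: if `μ ≪ ν` it is `∫ (ρ ln ρ − ρ + 1) dν` where
`ρ` is the density of `μ` with respect to `ν`, and `∞` otherwise. -/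
noncomputable def infoDiv {Ω : Type*} [MeasurableSpace Ω] (μ ν : Measure Ω) : ℝ≥0∞ :=
  if μ ≪ ν then
    ∫⁻ x, ENNReal.ofReal ((μ.rnDeriv ν x).toReal * Real.log (μ.rnDeriv ν x).toReal
      - (μ.rnDeriv ν x).toReal + 1) ∂ν
  else ∞

/-- `μ_F := ν.withDensity Y`, with `Y` a conditional density of `μ` given the
sub-σ-algebra `F`, is the information projection of `ν` onto the set of finite
measures agreeing with `μ` on `F`: `D(μ_F‖ν) ≤ D(θ‖ν)` for all such `θ`. -/
theorem infoDiv_projection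
    {Ω : Type*} [mΩ : MeasurableSpace Ω] (ν : Measure Ω) [IsFiniteMeasure ν]
    (ρ : Ω → ℝ≥0∞) (hρ : Measurable ρ)
    (μ : Measure Ω) (hμ : μ = ν.withDensity ρ) [IsFiniteMeasure μ]
    (F : MeasurableSpace Ω) (hF : F ≤ mΩ)
    (Y : Ω → ℝ≥0∞) (hYmeas : Measurable[F] Y)
    (hY : ∀ A : Set Ω, MeasurableSet[F] A → ∫⁻ x in A, Y x ∂ν = μ A) :
    ∀ θ : @Measure Ω mΩ, IsFiniteMeasure θ →
      (∀ A : Set Ω, MeasurableSet[F] A → θ A = μ A) →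
      @infoDiv Ω mΩ (ν.withDensity Y) ν ≤ @infoDiv Ω mΩ θ ν := by
  intro θ hθfin hθ
  by_cases hac : θ ≪ ν
  swap
  · unfold infoDiv
    rw [if_neg hac]
    exact le_top
  set g : Ω → ℝ≥0∞ := θ.rnDeriv ν with hgdef
  have hgmeas : Measurable[mΩ] g := θ.measurable_rnDeriv ν
  have hgθ : ν.withDensity g = θ := Measure.withDensity_rnDeriv_eq θ ν hac
  have hYm : Measurable[mΩ] Y := hYmeas.mono hF le_rfl
  have hYint : ∫⁻ x, Y x ∂ν ≠ ∞ := by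
    rw [← setLIntegral_univ, hY Set.univ MeasurableSet.univ]
    exact (measure_lt_top μ _).ne
  have hgint : ∫⁻ x, g x ∂ν ≠ ∞ := (Measure.lintegral_rnDeriv_lt_top θ ν).ne
  -- zero set
  have hzero : ∀ᵐ x ∂ν, Y x = 0 → g x = 0 := by
    have hS : MeasurableSet[F] {x | Y x = 0} := hYmeas (measurableSet_singleton 0)
    have hS' : MeasurableSet[mΩ] {x | Y x = 0} := hF _ hS
    have h1 : ∫⁻ x in {x | Y x = 0}, g x ∂ν = 0 := by
      have e1 : ∫⁻ x in {x | Y x = 0}, g x ∂ν = θ {x | Y x = 0} := by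
        rw [← hgθ, withDensity_apply _ hS']
      have e2 : ∫⁻ x in {x | Y x = 0}, Y x ∂ν = ∫⁻ _ in {x | Y x = 0}, 0 ∂ν :=
        setLIntegral_congr_fun hS' (fun x hx => hx)
      rw [e1, hθ _ hS, ← hY _ hS, e2, lintegral_zero]
    have h2 : ∀ᵐ x ∂ν.restrict {x | Y x = 0}, g x = 0 := by
      have := (lintegral_eq_zero_iff hgmeas).mp h1
      filter_upwards [this] with x hx using hx
    rw [ae_restrict_iff' hS'] at h2
    filter_upwards [h2] with x hx hY0 using hx hY0
  -- agreement on F and the tower property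
  have agree : ∀ A, MeasurableSet[F] A → (ν.withDensity g) A = (ν.withDensity Y) A := by
    intro A hA
    rw [hgθ, hθ A hA, ← hY A hA, withDensity_apply _ (hF _ hA)]
  have htower : ∀ q : ℝ → ℝ, Measurable q →
      ∫⁻ x, g x * ENNReal.ofReal (q (Y x).toReal) ∂ν
        = ∫⁻ x, Y x * ENNReal.ofReal (q (Y x).toReal) ∂ν := by
    intro q hq
    set h : Ω → ℝ≥0∞ := fun x => ENNReal.ofReal (q (Y x).toReal) with hh
    have hhF : Measurable[F] h := (hq.comp hYmeas.ennreal_toReal).ennreal_ofReal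
    have hhm : Measurable[mΩ] h := hhF.mono hF le_rfl
    have etrim : (ν.withDensity g).trim hF = (ν.withDensity Y).trim hF := by
      refine @Measure.ext Ω F _ _ fun A hA => ?_
      rw [@trim_measurableSet_eq Ω F mΩ _ A hF hA, @trim_measurableSet_eq Ω F mΩ _ A hF hA,
        agree A hA]
    have e1 := @lintegral_trim Ω F mΩ (ν.withDensity g) hF h hhF
    have e2 := @lintegral_trim Ω F mΩ (ν.withDensity Y) hF h hhF
    have e3 : ∫⁻ x, h x ∂(ν.withDensity g) = ∫⁻ x, h x ∂(ν.withDensity Y) := by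
      rw [← e1, ← e2, etrim]
    rw [lintegral_withDensity_eq_lintegral_mul ν hgmeas hhm,
      lintegral_withDensity_eq_lintegral_mul ν hYm hhm] at e3
    simpa [Pi.mul_apply] using e3
  -- conclude
  have key := @infoDiv_core Ω mΩ ν inferInstance Y g hYm hgmeas hYint hgint hzero htower
  unfold infoDiv
  rw [if_pos hac, if_pos (withDensity_absolutelyContinuous ν Y)]
  refine le_trans (le_of_eq ?_) key
  refine lintegral_congr_ae ?_
  filter_upwards [Measure.rnDeriv_withDensity ν hYm] with x hx
  rw [hx]
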